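/- Let k ≥ 1 and let R_0, R_1, ..., R_k be nonnegative real numbers assigned to the vertices 0, 1, ..., k of an undirected path with edges {j, j+1} for j = 0, ..., k−1. Then there exist nonnegative edge weights ρ_{{j,j+1}}, j = 0, ..., k−1, such that (a) for every vertex j, the sum of ρ over edges incident to j is at least R_j, and (b) the total sum Σ_j ρ_{{j,j+1}} equals Σ_{j∈I} R_j for some independent set I of the path (a set of vertices containing no two consecutive indices). -/

import Mathlib

variable {V : Type*}

/-- A directed cycle given as a nonempty list of distinct vertices
`v₁, …, v_k` with edges `v₁→v₂, …, v_{k-1}→v_k, v_k→v₁`. -/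
def IsCycle (E : V → V → Prop) : List V → Prop
  | [] => False
  | v :: l => (v :: l).Nodup ∧ List.Chain E v (l ++ [v])

/-- A directed graph is acyclic if it contains no directed cycle. -/
def Acyclic (E : V → V → Prop) : Prop := ∀ l : List V, ¬ IsCycle E l

/-- The subgraph of `E` induced by the vertex set `S`. -/
def Induced (E : V → V → Prop) (S : Set V) : V → V → Prop :=
  fun a b => a ∈ S ∧ b ∈ S ∧ E a b

/-- The graph obtained from `E` by deleting the edge `e`. -/
def Delete (E : V → V → Prop) (e : V × V) : V → V → Prop :=
  fun a b => E a b ∧ (a, b) ≠ e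

/-- `(a, b)` is an edge of the directed cycle determined by the list `l`
(consecutive elements, wrapping around). -/
def CycleEdge (l : List V) (a b : V) : Prop :=
  ∃ i : Fin l.length, l.get i = a ∧ l.get ⟨(↑i + 1) % l.length, Nat.mod_lt _ i.pos⟩ = b

/-- `G|_S` is a unicycle: the edge set of the induced subgraph on `S` is exactly
the edge set of a Hamiltonian directed cycle of `G|_S`. -/
def IsUnicycle (E : V → V → Prop) (S : Set V) : Prop :=
  ∃ l : List V, l ≠ [] ∧ l.Nodup ∧ (∀ v, v ∈ l ↔ v ∈ S) ∧
    ∀ a b, Induced E S a b ↔ CycleEdge l a b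

lemma filt0 (n : ℕ) (hn : 1 ≤ n) :
    (Finset.range n).filter (fun e => e = 0 ∨ e + 1 = 0) = {0} := by
  ext x
  simp only [Finset.mem_filter, Finset.mem_range, Finset.mem_singleton]
  omega

lemma filtmid (n j : ℕ) (h1 : 1 ≤ j) (h2 : j < n) :
    (Finset.range n).filter (fun e => e = j ∨ e + 1 = j) = {j - 1, j} := by
  ext x
  simp only [Finset.mem_filter, Finset.mem_range, Finset.mem_insert, Finset.mem_singleton]
  omega

lemma filttop (n : ℕ) (h : 1 ≤ n) :
    (Finset.range n).filter (fun e => e = n ∨ e + 1 = n) = {n - 1} := by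
  ext x
  simp only [Finset.mem_filter, Finset.mem_range, Finset.mem_singleton]
  omega


theorem stmt12 (k : ℕ) (hk : 1 ≤ k) (R : ℕ → ℝ) (hR : ∀ j ≤ k, 0 ≤ R j) :
    ∃ ρ : ℕ → ℝ, (∀ e < k, 0 ≤ ρ e) ∧
      (∀ j ≤ k, R j ≤ ∑ e ∈ (Finset.range k).filter (fun e => e = j ∨ e + 1 = j), ρ e) ∧
      ∃ I : Finset ℕ, I ⊆ Finset.range (k + 1) ∧ (∀ a ∈ I, a + 1 ∉ I) ∧
        ∑ e ∈ Finset.range k, ρ e = ∑ j ∈ I, R j := by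
  induction k, hk using Nat.le_induction generalizing R with
  | base =>
    refine ⟨fun _ => max (R 0) (R 1), ?_, ?_, ?_⟩
    · intro e _
      exact le_max_of_le_left (hR 0 (by omega))
    · intro j hj
      interval_cases j
      · rw [filt0 1 le_rfl, Finset.sum_singleton]; exact le_max_left _ _
      · rw [filttop 1 le_rfl, Finset.sum_singleton]; exact le_max_right _ _
    · by_cases h : R 1 ≤ R 0
      · exact ⟨{0}, by simp, by simp, by simp [max_eq_left h]⟩
      · exact ⟨{1}, by simp, by simp, by simp [max_eq_right (le_of_not_ge h)]⟩
  | succ k hk ih =>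
    set R' : ℕ → ℝ := fun j => if j = 0 then max (R 1 - R 0) 0 else R (j + 1) with hR'def
    have hR'nn : ∀ j ≤ k, 0 ≤ R' j := by
      intro j hj
      by_cases h : j = 0
      · simp [hR'def, h]
      · simp only [hR'def, h, if_false]
        exact hR (j + 1) (by omega)
    obtain ⟨ρ', hρ'nn, hρ'cov, I', hI'sub, hI'ind, hI'sum⟩ := ih R' hR'nn
    refine ⟨fun e => if e = 0 then R 0 else ρ' (e - 1), ?_, ?_, ?_⟩
    · intro e he
      by_cases h : e = 0
      · simp only [h, if_pos rfl]; exact hR 0 (by omega)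
      · simp only [h, if_false]; exact hρ'nn (e - 1) (by omega)
    · -- coverage
      intro j hj
      match j, hj with
      | 0, _ =>
        rw [filt0 (k + 1) (by omega), Finset.sum_singleton]
        simp
      | 1, _ =>
        rw [filtmid (k + 1) 1 le_rfl (by omega)]
        have h0 := hρ'cov 0 (Nat.zero_le k)
        rw [filt0 k hk, Finset.sum_singleton] at h0
        rw [Finset.sum_pair (by omega : (0:ℕ) ≠ 1)]
        have h1 : R 1 - R 0 ≤ R' 0 := by simp [hR'def]
        norm_num
        linarith
      | (m + 2), hj =>
        by_cases htop : m + 2 = k + 1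
        · obtain rfl : k = m + 1 := by omega
          rw [htop, filttop (m + 2) (by omega), Finset.sum_singleton]
          have h0 := hρ'cov (m + 1) le_rfl
          rw [filttop (m + 1) (by omega), Finset.sum_singleton] at h0
          have hr : R' (m + 1) = R (m + 2) := by simp [hR'def]
          rw [hr] at h0
          norm_num
          exact h0
        · -- interior: 2 ≤ m+2 ≤ k
          have hlt : m + 2 < k + 1 := by omega
          rw [filtmid (k + 1) (m + 2) (by omega) hlt]
          rw [show (m + 2 - 1) = m + 1 from rfl]
          rw [Finset.sum_pair (by omega : m + 1 ≠ m + 2)]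
          simp only [if_neg (Nat.succ_ne_zero m), if_neg (Nat.succ_ne_zero (m+1)),
            Nat.add_sub_cancel]
          have h0 := hρ'cov (m + 1) (by omega)
          rw [filtmid k (m + 1) (by omega) (by omega), Finset.sum_pair (by omega : m + 1 - 1 ≠ m + 1),
            Nat.add_sub_cancel] at h0
          have : R' (m + 1) = R (m + 2) := by simp [hR'def]
          rw [this] at h0
          convert h0 using 3 <;> omega
    · -- total and independent set
      have htot : ∑ e ∈ Finset.range (k + 1), (if e = 0 then R 0 else ρ' (e - 1))
          = R 0 + ∑ e ∈ Finset.range k, ρ' e := by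
        rw [Finset.sum_range_succ']
        norm_num
        ring
      by_cases hc : 0 ∈ I' ∧ R 0 < R 1
      · refine ⟨I'.image (· + 1), ?_, ?_, ?_⟩
        · intro a ha
          obtain ⟨j, hj, rfl⟩ := Finset.mem_image.mp ha
          have := hI'sub hj
          simp only [Finset.mem_range] at *
          omega
        · intro a ha hb
          obtain ⟨j, hj, rfl⟩ := Finset.mem_image.mp ha
          obtain ⟨j', hj', he⟩ := Finset.mem_image.mp hb
          have : j' = j + 1 := by omega
          exact hI'ind j hj (this ▸ hj')
        · rw [htot, hI'sum, Finset.sum_image (by intro a _ b _ h; simp only at h; omega)]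
          have key : ∑ j ∈ I', (R (j + 1) - R' j) = R 0 := by
            rw [Finset.sum_eq_single_of_mem 0 hc.1]
            · simp [hR'def, max_eq_left (sub_nonneg.mpr hc.2.le)]
            · intro j _ hj0
              simp [hR'def, hj0]
          rw [Finset.sum_sub_distrib] at key
          linarith
      · refine ⟨insert 0 ((I'.erase 0).image (· + 1)), ?_, ?_, ?_⟩
        · intro a ha
          rcases Finset.mem_insert.mp ha with h | h
          · simp [h]
          · obtain ⟨j, hj, rfl⟩ := Finset.mem_image.mp h
            have := hI'sub (Finset.mem_of_mem_erase hj)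
            simp only [Finset.mem_range] at *
            omega
        · intro a ha hb
          rcases Finset.mem_insert.mp ha with h | h
          · subst h
            rcases Finset.mem_insert.mp hb with h' | h'
            · omega
            · obtain ⟨j, hj, he⟩ := Finset.mem_image.mp h'
              have : j = 0 := by omega
              exact (Finset.notMem_erase 0 I') (this ▸ hj)
          · obtain ⟨j, hj, rfl⟩ := Finset.mem_image.mp h
            rcases Finset.mem_insert.mp hb with h' | h'
            · omega
            · obtain ⟨j', hj', he⟩ := Finset.mem_image.mp h'
              have : j' = j + 1 := by omega
              exact hI'ind j (Finset.mem_of_mem_erase hj) (this ▸ Finset.mem_of_mem_erase hj')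
        · have h0ni : 0 ∉ (I'.erase 0).image (· + 1) := by
            simp
          rw [htot, hI'sum, Finset.sum_insert h0ni,
            Finset.sum_image (by intro a _ b _ h; simp only at h; omega)]
          have hsame : ∀ j ∈ I'.erase 0, R (j + 1) = R' j := by
            intro j hj
            have : j ≠ 0 := Finset.ne_of_mem_erase hj
            simp [hR'def, this]
          rw [Finset.sum_congr rfl hsame]
          have : ∑ j ∈ I'.erase 0, R' j = ∑ j ∈ I', R' j := by
            by_cases h0 : 0 ∈ I'
            · have : R' 0 = 0 := by
                have : R 1 ≤ R 0 := by
                  by_contra hlt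
                  exact hc ⟨h0, lt_of_not_ge hlt⟩
                simp [hR'def, max_eq_right (sub_nonpos.mpr this)]
              exact Finset.sum_erase _ this
            · rw [Finset.erase_eq_of_notMem h0]
          rw [this]
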